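/- Let σ > 0, t > 0, μ ∈ ℝ, K, K' > 0, and x ∈ ℝ. Then ∫_ℝ (−μ) ∂_y[(2πσ²t)^{−1/2} exp(−(x−y)²/(2σ²t))] · max(e^{2 log K − y} − K', 0) dy = −μ e^{2 log K − x + σ²t/2} 𝒩((2 log K − log K' − x + σ²t)/(σ√t)). -/

import Mathlib

open MeasureTheory Set Filter Real

set_option maxHeartbeats 1000000

/-- The standard normal cumulative distribution function. -/
noncomputable def stdNormalCdf (x : ℝ) : ℝ :=
  ∫ u in Set.Iio x, (Real.sqrt (2 * Real.pi))⁻¹ * Real.exp (-u ^ 2 / 2)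

noncomputable def phiAux (u : ℝ) : ℝ := (Real.sqrt (2 * Real.pi))⁻¹ * Real.exp (-u ^ 2 / 2)

lemma phiAux_cont : Continuous phiAux := by
  unfold phiAux
  fun_prop

lemma phiAux_integrable : Integrable phiAux := by
  have h : Integrable (fun u : ℝ => Real.exp (-(1/2 : ℝ) * u ^ 2)) :=
    integrable_exp_neg_mul_sq (by norm_num)
  have h2 := h.const_mul (Real.sqrt (2 * Real.pi))⁻¹
  refine h2.congr (Filter.Eventually.of_forall fun u => ?_)
  simp only [phiAux]
  rw [show -(1/2:ℝ)*u^2 = -u^2/2 by ring]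

lemma stdNormalCdf_eq_Iic (z : ℝ) : stdNormalCdf z = ∫ u in Set.Iic z, phiAux u := by
  rw [stdNormalCdf, integral_Iic_eq_integral_Iio]
  rfl

lemma stdNormalCdf_eq (z : ℝ) :
    stdNormalCdf z = (∫ u in Set.Iic (0:ℝ), phiAux u) + ∫ u in (0:ℝ)..z, phiAux u := by
  rw [stdNormalCdf_eq_Iic,
    ← intervalIntegral.integral_Iic_sub_Iic phiAux_integrable.integrableOn
      phiAux_integrable.integrableOn]
  ring

lemma hasDerivAt_stdNormalCdf (z : ℝ) : HasDerivAt stdNormalCdf (phiAux z) z := by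
  have h : HasDerivAt (fun z => (∫ u in Set.Iic (0:ℝ), phiAux u) + ∫ u in (0:ℝ)..z, phiAux u)
      (phiAux z) z := by
    apply HasDerivAt.const_add
    exact intervalIntegral.integral_hasDerivAt_right
      (phiAux_integrable.intervalIntegrable)
      (phiAux_cont.stronglyMeasurable.stronglyMeasurableAtFilter)
      phiAux_cont.continuousAt
  have he : (fun z => (∫ u in Set.Iic (0:ℝ), phiAux u) + ∫ u in (0:ℝ)..z, phiAux u)
      = stdNormalCdf := funext fun z => (stdNormalCdf_eq z).symm
  rwa [he] at h

lemma tendsto_stdNormalCdf_atBot : Tendsto stdNormalCdf atBot (nhds 0) := by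
  have key := intervalIntegral_tendsto_integral_Iic (0:ℝ)
    (phiAux_integrable.integrableOn) tendsto_id
  have h : Tendsto (fun z : ℝ => (∫ u in Set.Iic (0:ℝ), phiAux u) - ∫ u in z..(0:ℝ), phiAux u)
      atBot (nhds ((∫ u in Set.Iic (0:ℝ), phiAux u) - ∫ u in Set.Iic (0:ℝ), phiAux u)) :=
    tendsto_const_nhds.sub key
  rw [sub_self] at h
  refine h.congr fun z => ?_
  rw [stdNormalCdf_eq_Iic,
    ← intervalIntegral.integral_Iic_sub_Iic phiAux_integrable.integrableOn
      phiAux_integrable.integrableOn]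
  ring

lemma integrable_lin_gauss (b c d : ℝ) (hb : 0 < b) :
    Integrable fun y : ℝ => (c - y) * Real.exp (-b * (y - d) ^ 2) := by
  have h := ((integrable_exp_neg_mul_sq hb).const_mul (c - d)).sub
    (integrable_mul_exp_neg_mul_sq hb)
  have h2 := h.comp_sub_right d
  refine h2.congr (Filter.Eventually.of_forall fun y => ?_)
  simp only [Pi.sub_apply]
  ring

/-- The Gaussian kernel `p_σ(t,x,y) := (2πσ²t)^{−1/2} exp(−(x−y)²/(2σ²t))`. -/
noncomputable def gaussKer (σ t x y : ℝ) : ℝ :=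
  (Real.sqrt (2 * Real.pi * σ ^ 2 * t))⁻¹ * Real.exp (-(x - y) ^ 2 / (2 * σ ^ 2 * t))

lemma tendsto_gauss_atBot (b d : ℝ) (hb : 0 < b) :
    Tendsto (fun y : ℝ => Real.exp (-b * (y - d) ^ 2)) atBot (nhds 0) := by
  have h1 : Tendsto (fun y : ℝ => y - d) atBot atBot := by
    simpa [sub_eq_add_neg] using
      tendsto_atBot_add_const_right (atBot : Filter ℝ) (-d) tendsto_id
  have hsq' : Tendsto (fun z : ℝ => z ^ 2) atBot atTop := by
    have h := (tendsto_pow_atTop (n := 2) two_ne_zero).comp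
      (tendsto_neg_atBot_atTop (G := ℝ))
    refine h.congr fun z => ?_
    simp [Function.comp, neg_sq]
  have h2 : Tendsto (fun y : ℝ => (y - d) ^ 2) atBot atTop := hsq'.comp h1
  have h3 : Tendsto (fun y : ℝ => -b * (y - d) ^ 2) atBot atBot :=
    h2.const_mul_atTop_of_neg (neg_neg_iff_pos.mpr hb)
  exact Real.tendsto_exp_atBot.comp h3

/-- For `σ, t > 0`, `μ ∈ ℝ`, `K, K' > 0` and `x ∈ ℝ`,
`∫ (−μ) ∂_y[p_σ(t,x,y)] max(e^{2 log K − y} − K', 0) dy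
  = −μ e^{2 log K − x + σ²t/2} 𝒩((2 log K − log K' − x + σ²t)/(σ√t))`. -/
theorem stmt_17 (σ t μ K K' x : ℝ) (hσ : 0 < σ) (ht : 0 < t) (hK : 0 < K) (hK' : 0 < K') :
    (∫ y : ℝ, (-μ) * deriv (fun y' => gaussKer σ t x y') y
        * max (Real.exp (2 * Real.log K - y) - K') 0)
      = -μ * Real.exp (2 * Real.log K - x + σ ^ 2 * t / 2)
          * stdNormalCdf ((2 * Real.log K - Real.log K' - x + σ ^ 2 * t) / (σ * Real.sqrt t)) := by
  have hσ' : σ ≠ 0 := ne_of_gt hσ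
  have ht' : t ≠ 0 := ne_of_gt ht
  have hs : (0:ℝ) < σ ^ 2 * t := by positivity
  have hs' : σ ^ 2 * t ≠ 0 := ne_of_gt hs
  have hsqpos : (0:ℝ) < σ * Real.sqrt t := by positivity
  have hsq2 : (σ * Real.sqrt t) ^ 2 = σ ^ 2 * t := by
    rw [mul_pow, Real.sq_sqrt ht.le]
  have hsqrt : Real.sqrt (2 * Real.pi * σ ^ 2 * t)
      = Real.sqrt (2 * Real.pi) * (σ * Real.sqrt t) := by
    rw [show 2 * Real.pi * σ ^ 2 * t = (2 * Real.pi) * (σ ^ 2 * t) by ring,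
      Real.sqrt_mul (by positivity), ← hsq2, Real.sqrt_sq hsqpos.le]
  -- derivative of the kernel
  have hp : ∀ y : ℝ, HasDerivAt (fun y' => gaussKer σ t x y')
      (gaussKer σ t x y * ((x - y) / (σ ^ 2 * t))) y := by
    intro y
    have h1 : HasDerivAt (fun y' : ℝ => x - y') (-1) y := (hasDerivAt_id y).const_sub x
    have h2 := (((h1.pow 2).neg.div_const (2 * σ ^ 2 * t)).exp).const_mul
      (Real.sqrt (2 * Real.pi * σ ^ 2 * t))⁻¹
    refine h2.congr_deriv ?_
    unfold gaussKer
    simp only [Pi.pow_apply, Pi.neg_apply]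
    field_simp
    ring
  have hderiv_eq : ∀ y : ℝ, deriv (fun y' => gaussKer σ t x y') y
      = gaussKer σ t x y * ((x - y) / (σ ^ 2 * t)) := fun y => (hp y).deriv
  simp only [hderiv_eq]
  -- exponent identities
  have hE1 : ∀ y : ℝ, Real.exp (-(x - y) ^ 2 / (2 * σ ^ 2 * t)) * Real.exp (2 * Real.log K - y)
      = Real.exp (2 * Real.log K - x + σ ^ 2 * t / 2)
        * Real.exp (-(1 / (2 * (σ ^ 2 * t))) * (y - (x - σ ^ 2 * t)) ^ 2) := by
    intro y
    rw [← Real.exp_add, ← Real.exp_add]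
    congr 1
    field_simp
    ring
  have hE2 : ∀ y : ℝ, Real.exp (-(x - y) ^ 2 / (2 * σ ^ 2 * t))
      = Real.exp (-(1 / (2 * (σ ^ 2 * t))) * (y - x) ^ 2) := by
    intro y
    congr 1
    field_simp
    ring
  have hQ : ∀ y : ℝ, -((y - (x - σ ^ 2 * t)) / (σ * Real.sqrt t)) ^ 2 / 2
      = -(1 / (2 * (σ ^ 2 * t))) * (y - (x - σ ^ 2 * t)) ^ 2 := by
    intro y
    rw [div_pow, hsq2]
    field_simp
  -- the key identity  p(y) * exp(a - y) = E * phi(u y) * sq⁻¹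
  have hkey : ∀ y : ℝ, gaussKer σ t x y * Real.exp (2 * Real.log K - y)
      = Real.exp (2 * Real.log K - x + σ ^ 2 * t / 2)
        * phiAux ((y - (x - σ ^ 2 * t)) / (σ * Real.sqrt t)) * (σ * Real.sqrt t)⁻¹ := by
    intro y
    unfold gaussKer phiAux
    rw [hsqrt, hQ y, mul_assoc ((Real.sqrt (2 * Real.pi) * (σ * Real.sqrt t))⁻¹),
      hE1 y]
    ring
  -- max facts
  have hmax_eq : ∀ y ∈ Set.Iic (2 * Real.log K - Real.log K'),
      max (Real.exp (2 * Real.log K - y) - K') 0 = Real.exp (2 * Real.log K - y) - K' := by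
    intro y hy
    refine max_eq_left (sub_nonneg.mpr ?_)
    calc K' = Real.exp (Real.log K') := (Real.exp_log hK').symm
    _ ≤ Real.exp (2 * Real.log K - y) := by
        apply Real.exp_le_exp.mpr
        have := hy.out
        linarith
  have hmax0 : ∀ y ∉ Set.Iic (2 * Real.log K - Real.log K'),
      -μ * (gaussKer σ t x y * ((x - y) / (σ ^ 2 * t)))
        * max (Real.exp (2 * Real.log K - y) - K') 0 = 0 := by
    intro y hy
    have hy' : 2 * Real.log K - Real.log K' < y := not_le.mp hy
    have h1 : Real.exp (2 * Real.log K - y) - K' ≤ 0 := by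
      rw [sub_nonpos, show K' = Real.exp (Real.log K') from (Real.exp_log hK').symm]
      apply Real.exp_le_exp.mpr
      linarith
    rw [max_eq_right h1, mul_zero]
  -- F, the antiderivative
  set F : ℝ → ℝ := fun y => -μ * (gaussKer σ t x y * (Real.exp (2 * Real.log K - y) - K')
      + Real.exp (2 * Real.log K - x + σ ^ 2 * t / 2)
        * stdNormalCdf ((y - (x - σ ^ 2 * t)) / (σ * Real.sqrt t))) with hFdef
  have hF : ∀ y : ℝ, HasDerivAt F
      (-μ * (gaussKer σ t x y * ((x - y) / (σ ^ 2 * t)))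
        * (Real.exp (2 * Real.log K - y) - K')) y := by
    intro y
    have h1 : HasDerivAt (fun y' : ℝ => Real.exp (2 * Real.log K - y') - K')
        (-Real.exp (2 * Real.log K - y)) y := by
      simpa using (((hasDerivAt_id y).const_sub (2 * Real.log K)).exp.sub_const K')
    have h2 := (hp y).mul h1
    have h3 : HasDerivAt (fun y' : ℝ => (y' - (x - σ ^ 2 * t)) / (σ * Real.sqrt t))
        ((σ * Real.sqrt t)⁻¹) y := by
      simpa using (((hasDerivAt_id y).sub_const (x - σ ^ 2 * t)).div_const (σ * Real.sqrt t))
    have h4 := ((hasDerivAt_stdNormalCdf ((y - (x - σ ^ 2 * t)) / (σ * Real.sqrt t))).comp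
      y h3).const_mul (Real.exp (2 * Real.log K - x + σ ^ 2 * t / 2))
    have h5 := (h2.add h4).const_mul (-μ)
    rw [hFdef]
    have hval : -μ * (gaussKer σ t x y * ((x - y) / (σ ^ 2 * t)))
          * (Real.exp (2 * Real.log K - y) - K')
        = -μ * ((gaussKer σ t x y * ((x - y) / (σ ^ 2 * t))
              * (Real.exp (2 * Real.log K - y) - K')
            + gaussKer σ t x y * -Real.exp (2 * Real.log K - y))
          + Real.exp (2 * Real.log K - x + σ ^ 2 * t / 2)
            * (phiAux ((y - (x - σ ^ 2 * t)) / (σ * Real.sqrt t)) * (σ * Real.sqrt t)⁻¹)) := by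
      linear_combination (-μ) * hkey y
    rw [hval]
    exact h5
  -- limit of F at -∞
  have hu : Tendsto (fun y : ℝ => (y - (x - σ ^ 2 * t)) / (σ * Real.sqrt t)) atBot atBot := by
    apply Tendsto.atBot_div_const hsqpos
    have hu0 : Tendsto (fun y : ℝ => y + -(x - σ ^ 2 * t)) atBot atBot :=
      tendsto_atBot_add_const_right (atBot : Filter ℝ) (-(x - σ ^ 2 * t)) tendsto_id
    exact hu0.congr fun y => (sub_eq_add_neg y _).symm
  have t1 : Tendsto (fun y : ℝ => gaussKer σ t x y * Real.exp (2 * Real.log K - y))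
      atBot (nhds 0) := by
    have h := (tendsto_gauss_atBot (1 / (2 * (σ ^ 2 * t))) (x - σ ^ 2 * t)
      (by positivity)).const_mul
      (Real.exp (2 * Real.log K - x + σ ^ 2 * t / 2) * (Real.sqrt (2 * Real.pi))⁻¹
        * (σ * Real.sqrt t)⁻¹)
    rw [mul_zero] at h
    refine h.congr fun y => ?_
    rw [hkey y]
    unfold phiAux
    rw [hQ y]
    ring
  have t2 : Tendsto (fun y : ℝ => gaussKer σ t x y) atBot (nhds 0) := by
    have h := (tendsto_gauss_atBot (1 / (2 * (σ ^ 2 * t))) x (by positivity)).const_mul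
      (Real.sqrt (2 * Real.pi * σ ^ 2 * t))⁻¹
    rw [mul_zero] at h
    refine h.congr fun y => ?_
    unfold gaussKer
    rw [hE2 y]
  have t3 : Tendsto (fun y : ℝ =>
      stdNormalCdf ((y - (x - σ ^ 2 * t)) / (σ * Real.sqrt t))) atBot (nhds 0) :=
    tendsto_stdNormalCdf_atBot.comp hu
  have hFlim : Tendsto F atBot (nhds 0) := by
    have h := ((t1.sub (t2.mul_const K')).add
      (t3.const_mul (Real.exp (2 * Real.log K - x + σ ^ 2 * t / 2)))).const_mul (-μ)
    simp only [zero_mul, mul_zero, sub_zero, zero_sub, add_zero, zero_add, neg_zero] at h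
    refine h.congr fun y => ?_
    rw [hFdef]
    ring
  -- integrability
  have hg : Integrable (fun y : ℝ => -μ * (gaussKer σ t x y * ((x - y) / (σ ^ 2 * t)))
      * (Real.exp (2 * Real.log K - y) - K')) := by
    have hA := (integrable_lin_gauss (1 / (2 * (σ ^ 2 * t))) x (x - σ ^ 2 * t)
      (by positivity)).const_mul
      (-μ * (Real.sqrt (2 * Real.pi * σ ^ 2 * t))⁻¹ / (σ ^ 2 * t)
        * Real.exp (2 * Real.log K - x + σ ^ 2 * t / 2))
    have hB := (integrable_lin_gauss (1 / (2 * (σ ^ 2 * t))) x x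
      (by positivity)).const_mul
      (-μ * (Real.sqrt (2 * Real.pi * σ ^ 2 * t))⁻¹ / (σ ^ 2 * t) * K')
    have h := hA.sub hB
    refine h.congr (Filter.Eventually.of_forall fun y => ?_)
    simp only [Pi.sub_apply]
    unfold gaussKer
    linear_combination (μ * (Real.sqrt (2 * Real.pi * σ ^ 2 * t))⁻¹ / (σ ^ 2 * t) * (x - y))
        * hE1 y
      - (μ * (Real.sqrt (2 * Real.pi * σ ^ 2 * t))⁻¹ / (σ ^ 2 * t) * K' * (x - y)) * hE2 y
  have hIntOn : IntegrableOn (fun y : ℝ => -μ * (gaussKer σ t x y * ((x - y) / (σ ^ 2 * t)))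
      * max (Real.exp (2 * Real.log K - y) - K') 0)
      (Set.Iic (2 * Real.log K - Real.log K')) := by
    refine hg.integrableOn.congr_fun (fun y hy => ?_) measurableSet_Iic
    rw [hmax_eq y hy]
  -- FTC
  have FTC := integral_Iic_of_hasDerivAt_of_tendsto (f := F)
    (f' := fun y : ℝ => -μ * (gaussKer σ t x y * ((x - y) / (σ ^ 2 * t)))
      * max (Real.exp (2 * Real.log K - y) - K') 0)
    (a := 2 * Real.log K - Real.log K') (m := 0)
    ((hF _).continuousAt.continuousWithinAt)
    (fun y hy => by
      show HasDerivAt F (-μ * (gaussKer σ t x y * ((x - y) / (σ ^ 2 * t)))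
        * max (Real.exp (2 * Real.log K - y) - K') 0) y
      rw [hmax_eq y (Set.mem_Iic.mpr (le_of_lt (Set.mem_Iio.mp hy)))]; exact hF y)
    hIntOn hFlim
  rw [← setIntegral_eq_integral_of_forall_compl_eq_zero hmax0, FTC]
  simp only [hFdef]
  rw [show 2 * Real.log K - (2 * Real.log K - Real.log K') = Real.log K' by ring,
    Real.exp_log hK',
    show 2 * Real.log K - Real.log K' - (x - σ ^ 2 * t)
      = 2 * Real.log K - Real.log K' - x + σ ^ 2 * t by ring]
  ring
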